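/- Let X ∈ ℝ^{n×d}, let ε be a random vector in ℝ^n on a probability space, let β ∈ ℝ^d, and set y = Xβ + ε. Let C₁,…,C_M be a partition of {1,…,n}, and for each m let P_m ∈ ℝ^{|C_m|×|C_m|} satisfy P_mᵀ = P_m and P_m² = I. For each m define the augmented design X̃_m = [X_{C_m}, P_m X_{C_m}] ∈ ℝ^{|C_m|×2d} (rows of X restricted to C_m together with their P_m-transforms), assume X̃_mᵀX̃_m is invertible, let H_m = X̃_m(X̃_mᵀX̃_m)⁻¹X̃_mᵀ, and define the mosaic residuals ε̂_{C_m} = (I − H_m) y_{C_m}, which equals (I − H_m) ε_{C_m}. Suppose that for every z ∈ {0,1}^M the joint distribution of (ε_{C_1},…,ε_{C_M}) equals the joint distribution of (P₁^{z₁} ε_{C_1},…,P_M^{z_M} ε_{C_M}). Then for every z ∈ {0,1}^M the joint distribution of (ε̂_{C_1},…,ε̂_{C_M}) equals the joint distribution of (P₁^{z₁} ε̂_{C_1},…,P_M^{z_M} ε̂_{C_M}). -/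

import Mathlib

open MeasureTheory ProbabilityTheory Matrix Finset

noncomputable section

private lemma measurable_mulVec_aux {ι κ : Type*} [Fintype ι] [Fintype κ] [DecidableEq ι]
    (A : Matrix ι κ ℝ) : Measurable fun v : κ → ℝ => A.mulVec v := by
  apply measurable_pi_lambda
  intro i
  simp only [Matrix.mulVec, dotProduct]
  exact Finset.measurable_sum _ fun j _ => (measurable_pi_apply j).const_mul _

theorem stmt_1 {Ω : Type*} [MeasurableSpace Ω] (μ : Measure Ω) [IsProbabilityMeasure μ]
    (n d M : ℕ) (X : Matrix (Fin n) (Fin d) ℝ) (β : Fin d → ℝ)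
    (ε : Ω → Fin n → ℝ) (hmeas : Measurable ε)
    (y : Ω → Fin n → ℝ) (hy : ∀ ω, y ω = X.mulVec β + ε ω)
    (c : Fin n → Fin M)
    (P : ∀ m : Fin M, Matrix {i : Fin n // c i = m} {i : Fin n // c i = m} ℝ)
    (hPsymm : ∀ m, (P m)ᵀ = P m) (hPidem : ∀ m, P m * P m = 1)
    (Xc : ∀ m : Fin M, Matrix {i : Fin n // c i = m} (Fin d) ℝ)
    (hXc : ∀ m, Xc m = fun i j => X i.1 j)
    (Xaug : ∀ m : Fin M, Matrix {i : Fin n // c i = m} (Fin d ⊕ Fin d) ℝ)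
    (hXaug : ∀ m, Xaug m = Matrix.fromCols (Xc m) (P m * Xc m))
    (hrank : ∀ m, IsUnit ((Xaug m)ᵀ * Xaug m))
    (H : ∀ m : Fin M, Matrix {i : Fin n // c i = m} {i : Fin n // c i = m} ℝ)
    (hH : ∀ m, H m = Xaug m * ((Xaug m)ᵀ * Xaug m)⁻¹ * (Xaug m)ᵀ)
    (εhat : Ω → ∀ m : Fin M, {i : Fin n // c i = m} → ℝ)
    (hεhat : ∀ ω m, εhat ω m = (1 - H m).mulVec (fun i => y ω i.1))
    (hinv : ∀ z : Fin M → Bool,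
      Measure.map (fun ω => fun m : Fin M => fun i : {i : Fin n // c i = m} => ε ω i.1) μ =
        Measure.map (fun ω => fun m : Fin M =>
          (if z m then P m else 1).mulVec (fun i : {i : Fin n // c i = m} => ε ω i.1)) μ) :
    ∀ z : Fin M → Bool,
      Measure.map (fun ω => fun m : Fin M => εhat ω m) μ =
        Measure.map (fun ω => fun m : Fin M => (if z m then P m else 1).mulVec (εhat ω m)) μ := by
  -- the swap matrix
  set S : Matrix (Fin d ⊕ Fin d) (Fin d ⊕ Fin d) ℝ :=
    Matrix.fromBlocks 0 1 1 0 with hS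
  have hSS : S * S = 1 := by
    simp [hS, Matrix.fromBlocks_multiply, ← Matrix.fromBlocks_one]
  have hST : Sᵀ = S := by
    simp [hS, Matrix.fromBlocks_transpose]
  have hSinv : S⁻¹ = S := Matrix.inv_eq_right_inv hSS
  -- commutation of P with H
  have hPA : ∀ m, P m * Xaug m = Xaug m * S := by
    intro m
    rw [hXaug]
    rw [Matrix.mul_fromCols, Matrix.fromCols_mul_fromBlocks]
    rw [← Matrix.mul_assoc, hPidem]
    simp
  have hAtP : ∀ m, (Xaug m)ᵀ * P m = S * (Xaug m)ᵀ := by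
    intro m
    have := congrArg Matrix.transpose (hPA m)
    simpa [Matrix.transpose_mul, hPsymm m, hST] using this
  have hGram : ∀ m, S * ((Xaug m)ᵀ * Xaug m) * S = (Xaug m)ᵀ * Xaug m := by
    intro m
    calc S * ((Xaug m)ᵀ * Xaug m) * S
        = (S * (Xaug m)ᵀ) * (Xaug m * S) := by simp only [Matrix.mul_assoc]
      _ = ((Xaug m)ᵀ * P m) * (P m * Xaug m) := by rw [hAtP, hPA]
      _ = (Xaug m)ᵀ * (P m * P m) * Xaug m := by simp only [Matrix.mul_assoc]
      _ = (Xaug m)ᵀ * Xaug m := by rw [hPidem, Matrix.mul_one]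
  have hGinv : ∀ m, S * ((Xaug m)ᵀ * Xaug m)⁻¹ * S = ((Xaug m)ᵀ * Xaug m)⁻¹ := by
    intro m
    have h := congrArg (fun A : Matrix (Fin d ⊕ Fin d) (Fin d ⊕ Fin d) ℝ => A⁻¹) (hGram m)
    simp only [Matrix.mul_inv_rev, hSinv] at h
    rw [Matrix.mul_assoc]; exact h
  have hSG : ∀ m, S * ((Xaug m)ᵀ * Xaug m)⁻¹ = ((Xaug m)ᵀ * Xaug m)⁻¹ * S := by
    intro m
    conv_rhs => rw [← hGinv m]
    rw [Matrix.mul_assoc (S * ((Xaug m)ᵀ * Xaug m)⁻¹) S S, hSS, Matrix.mul_one]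
  have hPH : ∀ m, P m * H m = H m * P m := by
    intro m
    rw [hH]
    calc P m * (Xaug m * ((Xaug m)ᵀ * Xaug m)⁻¹ * (Xaug m)ᵀ)
        = (P m * Xaug m) * ((Xaug m)ᵀ * Xaug m)⁻¹ * (Xaug m)ᵀ := by
          simp only [Matrix.mul_assoc]
      _ = Xaug m * (S * ((Xaug m)ᵀ * Xaug m)⁻¹) * (Xaug m)ᵀ := by
          rw [hPA]; simp only [Matrix.mul_assoc]
      _ = Xaug m * ((Xaug m)ᵀ * Xaug m)⁻¹ * (S * (Xaug m)ᵀ) := by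
          rw [hSG]; simp only [Matrix.mul_assoc]
      _ = Xaug m * ((Xaug m)ᵀ * Xaug m)⁻¹ * (Xaug m)ᵀ * P m := by
          rw [← hAtP]; simp only [Matrix.mul_assoc]
  -- H fixes the cluster design
  have hHX : ∀ m, H m * Xc m = Xc m := by
    intro m
    have hdet : IsUnit ((Xaug m)ᵀ * Xaug m).det :=
      (Matrix.isUnit_iff_isUnit_det _).mp (hrank m)
    have hGA : ((Xaug m)ᵀ * Xaug m)⁻¹ * ((Xaug m)ᵀ * Xaug m) = 1 :=
      Matrix.nonsing_inv_mul _ hdet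
    have hXcA : Xaug m * Matrix.fromRows (1 : Matrix (Fin d) (Fin d) ℝ) (0 : Matrix (Fin d) (Fin d) ℝ) = Xc m := by
      rw [hXaug, Matrix.fromCols_mul_fromRows]
      simp
    calc H m * Xc m
        = H m * (Xaug m * Matrix.fromRows (1 : Matrix (Fin d) (Fin d) ℝ) (0 : Matrix (Fin d) (Fin d) ℝ)) := by rw [hXcA]
      _ = Xaug m * (((Xaug m)ᵀ * Xaug m)⁻¹ * ((Xaug m)ᵀ * Xaug m)) * Matrix.fromRows (1 : Matrix (Fin d) (Fin d) ℝ) (0 : Matrix (Fin d) (Fin d) ℝ) := by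
          rw [hH]; simp only [Matrix.mul_assoc]
      _ = Xaug m * Matrix.fromRows (1 : Matrix (Fin d) (Fin d) ℝ) (0 : Matrix (Fin d) (Fin d) ℝ) := by rw [hGA, Matrix.mul_one]
      _ = Xc m := hXcA
  -- residuals depend only on ε
  have hres : ∀ ω m, εhat ω m = (1 - H m).mulVec (fun i => ε ω i.1) := by
    intro ω m
    rw [hεhat]
    have hsplit : (fun i : {i : Fin n // c i = m} => y ω i.1)
        = (Xc m).mulVec β + (fun i => ε ω i.1) := by
      funext i
      simp [hy ω, hXc m, Matrix.mulVec, dotProduct]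
    rw [hsplit, Matrix.mulVec_add]
    have : (1 - H m).mulVec ((Xc m).mulVec β) = 0 := by
      rw [Matrix.mulVec_mulVec]
      have : (1 - H m) * Xc m = 0 := by
        rw [Matrix.sub_mul, Matrix.one_mul, hHX m, sub_self]
      rw [this, Matrix.zero_mulVec]
    rw [this, zero_add]
  intro z
  -- commutation of P^z with 1 - H
  have hQcomm : ∀ m, (if z m then P m else 1) * (1 - H m)
      = (1 - H m) * (if z m then P m else 1) := by
    intro m
    by_cases h : z m <;> simp only [h, if_true, Bool.false_eq_true, if_false]
    · rw [Matrix.mul_sub, Matrix.sub_mul, Matrix.mul_one, Matrix.one_mul, hPH m]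
    · rw [Matrix.mul_one, Matrix.one_mul]
  -- write both sides as compositions
  set F : (∀ m : Fin M, {i : Fin n // c i = m} → ℝ) → ∀ m : Fin M, {i : Fin n // c i = m} → ℝ :=
    fun v m => (1 - H m).mulVec (v m) with hF
  have hFmeas : Measurable F := by
    apply measurable_pi_lambda
    intro m
    exact (measurable_mulVec_aux _).comp (measurable_pi_apply m)
  have hg : Measurable fun ω => fun m : Fin M => fun i : {i : Fin n // c i = m} => ε ω i.1 := by
    apply measurable_pi_lambda
    intro m
    apply measurable_pi_lambda
    intro i
    exact (measurable_pi_apply i.1).comp hmeas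
  have hg' : Measurable fun ω => fun m : Fin M =>
      (if z m then P m else 1).mulVec (fun i : {i : Fin n // c i = m} => ε ω i.1) := by
    apply measurable_pi_lambda
    intro m
    exact (measurable_mulVec_aux _).comp
      (measurable_pi_lambda _ fun i => (measurable_pi_apply i.1).comp hmeas)
  have h1 : (fun ω => fun m : Fin M => εhat ω m)
      = F ∘ (fun ω => fun m : Fin M => fun i : {i : Fin n // c i = m} => ε ω i.1) := by
    funext ω
    funext m
    exact hres ω m
  have h2 : (fun ω => fun m : Fin M => (if z m then P m else 1).mulVec (εhat ω m))
      = F ∘ (fun ω => fun m : Fin M =>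
          (if z m then P m else 1).mulVec (fun i : {i : Fin n // c i = m} => ε ω i.1)) := by
    funext ω
    funext m
    show (if z m then P m else 1).mulVec (εhat ω m)
        = (1 - H m).mulVec ((if z m then P m else 1).mulVec (fun i => ε ω i.1))
    rw [hres ω m, Matrix.mulVec_mulVec, Matrix.mulVec_mulVec, hQcomm m]
  rw [h1, h2, ← Measure.map_map hFmeas hg, ← Measure.map_map hFmeas hg', hinv z]

end
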